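/- Suppose φ is entire with φ^(n)(ξ) ≠ 0 for all n, z₀ ∈ ℂ, and for each N let b_j = exp(2πij/N), c_j = ξ − b_j z₀ (j = 1,…,N). Given target coefficients g_0,…,g_{N−1} ∈ ℂ, there exist unique a_1,…,a_N ∈ ℂ such that the function g̃(z) = ∑_{j=1}^N a_j φ(b_j z + c_j) satisfies g̃^(n)(z₀)/n! = g_n for all n = 0,…,N−1. Moreover max_j |a_j| ≤ max_{0≤n≤N−1} |g_n · n! / φ^(n)(ξ)|. -/

import Mathlib

open Complex Finset Real

private lemma iteratedDeriv_cmul {n : ℕ} (c : ℂ) {f : ℂ → ℂ} (hf : ContDiff ℂ n f) (x : ℂ) :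
    iteratedDeriv n (fun z => c * f z) x = c * iteratedDeriv n f x := by
  simp only [← iteratedDerivWithin_univ]
  exact iteratedDerivWithin_const_mul (Set.mem_univ x) uniqueDiffOn_univ c hf.contDiffWithinAt

private lemma iteratedDeriv_fun_sum' {ι : Type*} (u : Finset ι) (f : ι → ℂ → ℂ) {n : ℕ}
    (h : ∀ j ∈ u, ContDiff ℂ n (f j)) (x : ℂ) :
    iteratedDeriv n (fun z => ∑ j ∈ u, f j z) x = ∑ j ∈ u, iteratedDeriv n (f j) x := by
  simp only [iteratedDeriv_eq_iteratedFDeriv]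
  rw [show (fun z => ∑ j ∈ u, f j z) = (∑ j ∈ u, f j ·) from rfl, iteratedFDeriv_sum h]
  simp

set_option maxHeartbeats 1000000

theorem stmt12 (N : ℕ) (hN : 1 ≤ N) (φ : ℂ → ℂ) (hφ : Differentiable ℂ φ)
    (ξ z₀ : ℂ) (hnz : ∀ n : ℕ, iteratedDeriv n φ ξ ≠ 0) (g : Fin N → ℂ) :
    let b : Fin N → ℂ := fun j => Complex.exp (2 * Real.pi * Complex.I * (j.1 + 1) / N)
    let c : Fin N → ℂ := fun j => ξ - b j * z₀
    ∃ a : Fin N → ℂ,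
      (∀ n : Fin N, iteratedDeriv n.1 (fun z => ∑ j, a j * φ (b j * z + c j)) z₀
          / (n.1.factorial : ℂ) = g n) ∧
      (∀ a' : Fin N → ℂ,
        (∀ n : Fin N, iteratedDeriv n.1 (fun z => ∑ j, a' j * φ (b j * z + c j)) z₀
            / (n.1.factorial : ℂ) = g n) → a' = a) ∧
      ∀ j, ‖a j‖ ≤
        ⨆ n : Fin N, ‖g n * n.1.factorial / iteratedDeriv n.1 φ ξ‖ := by
  intro b c
  have hN0 : (N : ℂ) ≠ 0 := Nat.cast_ne_zero.mpr (by omega)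
  set ω : ℂ := Complex.exp (2 * Real.pi * Complex.I / N) with hωdef
  have hω0 : ω ≠ 0 := Complex.exp_ne_zero _
  have hprim : IsPrimitiveRoot ω N := Complex.isPrimitiveRoot_exp N (by omega)
  have hωN : ω ^ (N : ℤ) = 1 := (hprim.zpow_eq_one_iff_dvd N).mpr dvd_rfl
  -- b in terms of ω
  have hb : ∀ j : Fin N, b j = ω ^ ((j.1 : ℕ) + 1) := by
    intro j
    show Complex.exp (2 * Real.pi * Complex.I * (j.1 + 1) / N) = ω ^ ((j.1 : ℕ) + 1)
    rw [hωdef, ← Complex.exp_nat_mul]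
    congr 1
    push_cast
    ring_nf
  have hbz : ∀ j : Fin N, b j * z₀ + c j = ξ := by intro j; simp [c]
  -- orthogonality
  have key2 : ∀ k : ℤ, ∑ n : Fin N, ω ^ ((n.1 : ℤ) * k) = if (N : ℤ) ∣ k then (N : ℂ) else 0 := by
    intro k
    have hrw : ∀ n : Fin N, ω ^ ((n.1 : ℤ) * k) = (ω ^ k) ^ (n.1 : ℕ) := by
      intro n; rw [mul_comm, zpow_mul, zpow_natCast]
    rw [Finset.sum_congr rfl fun n _ => hrw n,
      Fin.sum_univ_eq_sum_range (fun i => (ω ^ k) ^ i)]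
    by_cases h : (N : ℤ) ∣ k
    · have h1 : ω ^ k = 1 := (hprim.zpow_eq_one_iff_dvd k).mpr h
      simp [h1, h]
    · have hne : ω ^ k ≠ 1 := fun hc => h ((hprim.zpow_eq_one_iff_dvd k).mp hc)
      have hxN : (ω ^ k) ^ N = 1 := by
        rw [← zpow_natCast, ← zpow_mul, mul_comm, zpow_mul, hωN, one_zpow]
      rw [geom_sum_eq hne, hxN]
      simp [h]
  have key1 : ∀ k : ℤ, ∑ j : Fin N, ω ^ (((j.1 : ℤ) + 1) * k)
      = if (N : ℤ) ∣ k then (N : ℂ) else 0 := by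
    intro k
    have : ∀ j : Fin N, ω ^ (((j.1 : ℤ) + 1) * k) = ω ^ k * ω ^ ((j.1 : ℤ) * k) := by
      intro j; rw [← zpow_add₀ hω0]; ring_nf
    rw [Finset.sum_congr rfl fun j _ => this j, ← Finset.mul_sum, key2 k]
    by_cases h : (N : ℤ) ∣ k
    · have h1 : ω ^ k = 1 := (hprim.zpow_eq_one_iff_dvd k).mpr h
      simp [h1, h]
    · simp [h]
  have dvd_iff : ∀ n m : Fin N, ((N : ℤ) ∣ ((n.1 : ℤ) - m.1)) ↔ m = n := by
    intro n m
    constructor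
    · intro h
      have h2 : |(n.1 : ℤ) - m.1| < N := by
        have := n.2; have := m.2
        rw [abs_lt]; omega
      have := Int.eq_zero_of_abs_lt_dvd h h2
      ext; omega
    · rintro rfl; simp
  -- powers of b
  have hbn : ∀ (j n : Fin N), b j ^ (n.1 : ℕ) = ω ^ (((j.1 : ℤ) + 1) * n.1) := by
    intro j n
    rw [hb j, ← pow_mul, ← zpow_natCast]
    congr 1 <;> push_cast <;> ring_nf
  -- the derivative formula
  set D : Fin N → ℂ := fun n => iteratedDeriv n.1 φ ξ with hDdef
  have hD : ∀ (a : Fin N → ℂ) (n : Fin N),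
      iteratedDeriv n.1 (fun z => ∑ j, a j * φ (b j * z + c j)) z₀
        = (∑ j, a j * b j ^ (n.1 : ℕ)) * D n := by
    intro a n
    have hφC : ∀ m : ℕ, ContDiff ℂ m φ := fun m => hφ.contDiff
    have hterm : ∀ j : Fin N, ContDiff ℂ n.1 (fun z => a j * φ (b j * z + c j)) :=
      fun j => ContDiff.mul contDiff_const
        ((hφC n.1).comp ((contDiff_const.mul contDiff_id).add contDiff_const))
    rw [iteratedDeriv_fun_sum' Finset.univ _ (fun j _ => hterm j) z₀, Finset.sum_mul]
    refine Finset.sum_congr rfl fun j _ => ?_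
    have hshift : ContDiff ℂ n.1 (fun w => φ (w + c j)) :=
      (hφC n.1).comp (contDiff_id.add contDiff_const)
    have h1 : iteratedDeriv n.1 (fun z => φ (b j * z + c j)) z₀
        = b j ^ (n.1 : ℕ) * iteratedDeriv n.1 φ ξ := by
      have h2 := congrFun (iteratedDeriv_comp_const_mul (f := fun w => φ (w + c j)) hshift (b j)) z₀
      have h3 : (fun z => φ (b j * z + c j)) = (fun x => (fun w => φ (w + c j)) (b j * x)) := rfl
      have h4 : iteratedDeriv n.1 (fun w => φ (w + c j)) (b j * z₀)
          = iteratedDeriv n.1 φ (b j * z₀ + c j) := by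
        rw [iteratedDeriv_comp_add_const]
      rw [h3, h2, h4, hbz j]
    have hc1 : ContDiff ℂ n.1 (fun z => φ (b j * z + c j)) :=
      (hφC n.1).comp ((contDiff_const.mul contDiff_id).add contDiff_const)
    rw [iteratedDeriv_cmul (a j) hc1 z₀, h1]
    ring
  -- the solution
  set s : Fin N → ℂ := fun n => g n * n.1.factorial / D n with hsdef
  set a : Fin N → ℂ := fun j => (∑ m : Fin N, ω ^ (-((j.1 : ℤ) + 1) * m.1) * s m) / N with hadef
  have hVa : ∀ n : Fin N, ∑ j, a j * b j ^ (n.1 : ℕ) = s n := by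
    intro n
    have hstep : ∀ j : Fin N, a j * b j ^ (n.1 : ℕ)
        = (∑ m : Fin N, s m * ω ^ (((j.1 : ℤ) + 1) * ((n.1 : ℤ) - m.1))) / N := by
      intro j
      rw [hadef, hbn j n, div_mul_eq_mul_div, Finset.sum_mul]
      congr 1
      refine Finset.sum_congr rfl fun m _ => ?_
      rw [mul_right_comm, ← zpow_add₀ hω0, mul_comm (ω ^ _) (s m)]
      ring_nf
    rw [Finset.sum_congr rfl fun j _ => hstep j, ← Finset.sum_div, Finset.sum_comm]
    have hinner : ∀ m : Fin N,
        ∑ j : Fin N, s m * ω ^ (((j.1 : ℤ) + 1) * ((n.1 : ℤ) - m.1))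
          = s m * (if (N : ℤ) ∣ ((n.1 : ℤ) - m.1) then (N : ℂ) else 0) := by
      intro m; rw [← Finset.mul_sum, key1]
    rw [Finset.sum_congr rfl fun m _ => hinner m]
    rw [Finset.sum_eq_single n (fun m _ hm => by
      rw [if_neg fun h => hm ((dvd_iff n m).mp h)]; ring) (by simp)]
    rw [if_pos (by simp), mul_div_assoc, div_self hN0, mul_one]
  refine ⟨a, ?_, ?_, ?_⟩
  · intro n
    rw [hD a n, hVa n, hsdef]
    have h1 : D n ≠ 0 := hnz n.1
    have h2 : ((n.1.factorial : ℂ)) ≠ 0 := Nat.cast_ne_zero.mpr n.1.factorial_ne_zero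
    field_simp
  · intro a' h'
    have hsys : ∀ n : Fin N, ∑ j, a' j * b j ^ (n.1 : ℕ) = s n := by
      intro n
      have := h' n
      rw [hD a' n] at this
      have h1 : D n ≠ 0 := hnz n.1
      have h2 : ((n.1.factorial : ℂ)) ≠ 0 := Nat.cast_ne_zero.mpr n.1.factorial_ne_zero
      rw [hsdef]
      field_simp at this ⊢
      linear_combination this
    funext j₀
    have h0 : ∑ n : Fin N, ω ^ (-(n.1 : ℤ) * ((j₀.1 : ℤ) + 1))
        * (∑ j, (a' j - a j) * b j ^ (n.1 : ℕ)) = 0 := by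
      refine Finset.sum_eq_zero fun n _ => ?_
      have : ∑ j, (a' j - a j) * b j ^ (n.1 : ℕ) = 0 := by
        have e1 := hsys n; have e2 := hVa n
        simp only [sub_mul, Finset.sum_sub_distrib, e1, e2, sub_self]
      rw [this, mul_zero]
    have hswap : ∑ n : Fin N, ω ^ (-(n.1 : ℤ) * ((j₀.1 : ℤ) + 1))
        * (∑ j, (a' j - a j) * b j ^ (n.1 : ℕ))
        = ∑ j : Fin N, (a' j - a j) *
            (if (N : ℤ) ∣ ((j.1 : ℤ) - j₀.1) then (N : ℂ) else 0) := by
      simp_rw [Finset.mul_sum]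
      rw [Finset.sum_comm]
      refine Finset.sum_congr rfl fun j _ => ?_
      rw [← key2 ((j.1 : ℤ) - j₀.1), Finset.mul_sum]
      refine Finset.sum_congr rfl fun n _ => ?_
      rw [hbn j n, mul_left_comm, ← zpow_add₀ hω0]
      congr 2
      ring
    rw [hswap] at h0
    have h1 : (a' j₀ - a j₀) * N = 0 := by
      rw [← h0]
      rw [Finset.sum_eq_single j₀ (fun j _ hj => by
        rw [if_neg fun h => hj (((dvd_iff j j₀).mp h).symm), mul_zero]) (by simp)]
      rw [if_pos (by simp)]
    have := mul_eq_zero.mp h1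
    rcases this with h | h
    · exact sub_eq_zero.mp h
    · exact absurd h hN0
  · intro j
    have habs1 : ‖ω‖ = 1 := by
      rw [hωdef, show (2 * (Real.pi : ℂ) * Complex.I / N) = ((2 * Real.pi / N : ℝ) : ℂ) * Complex.I
        by push_cast; ring, Complex.norm_exp_ofReal_mul_I]
    set S := ⨆ n : Fin N, ‖g n * n.1.factorial / iteratedDeriv n.1 φ ξ‖ with hSdef
    have hNe : Nonempty (Fin N) := ⟨⟨0, by omega⟩⟩
    have habs : ∀ n : Fin N, ‖s n‖ ≤ S := by
      intro n
      rw [hSdef]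
      exact le_ciSup
        (f := fun n : Fin N => ‖g n * n.1.factorial / iteratedDeriv n.1 φ ξ‖)
        (Set.Finite.bddAbove (Set.finite_range _)) n
    have hT : ‖∑ m : Fin N, ω ^ (-((j.1 : ℤ) + 1) * m.1) * s m‖ ≤ N * S := by
      calc ‖∑ m : Fin N, ω ^ (-((j.1 : ℤ) + 1) * m.1) * s m‖
          ≤ ∑ m : Fin N, ‖ω ^ (-((j.1 : ℤ) + 1) * m.1) * s m‖ :=
            norm_sum_le _ _
        _ = ∑ m : Fin N, ‖s m‖ := by
            refine Finset.sum_congr rfl fun m _ => ?_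
            rw [norm_mul, norm_zpow, habs1, one_zpow, one_mul]
        _ ≤ N * S := by
            have := Finset.sum_le_card_nsmul Finset.univ (fun m => ‖s m‖) S
              (fun m _ => habs m)
            simpa [Finset.card_univ, nsmul_eq_mul] using this
    have hNpos : (0 : ℝ) < N := by exact_mod_cast (by omega : 0 < N)
    have : ‖a j‖ = ‖∑ m : Fin N, ω ^ (-((j.1 : ℤ) + 1) * m.1) * s m‖ / N := by
      rw [hadef, norm_div, Complex.norm_natCast]
    rw [this, div_le_iff₀ hNpos]
    calc ‖∑ m : Fin N, ω ^ (-((j.1 : ℤ) + 1) * m.1) * s m‖ ≤ N * S := hT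
      _ = S * N := by ring
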